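/- Let d ≥ 1, ρ > 0, let Q ⊆ ℝ^d be a bounded Borel set, let B ⊆ Q be a Borel subset, and let n ∈ ℕ. For every measurable function F : 𝓜 → [0,∞], one has E_ρ^Q[μ ↦ F(μ)·1{μ(B) ≥ n}] ≤ ρ^n ∫_{B^n} E_ρ^Q[μ ↦ F(μ + δ_{y₁} + ⋯ + δ_{y_n})] dy₁⋯dy_n, with both sides understood as values in [0,∞]. -/

import Mathlib

open MeasureTheory
open scoped ENNReal

/-- The expectation of a `[0,∞]`-valued functional `F` of the configuration under the
Poisson point process of intensity `ρ` on the bounded Borel set `Q`. -/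
noncomputable def poissonExp (d : ℕ) (ρ : ℝ) (Q : Set (Fin d → ℝ))
    (F : Measure (Fin d → ℝ) → ℝ≥0∞) : ℝ≥0∞ :=
  ENNReal.ofReal (Real.exp (-(ρ * (volume Q).toReal))) *
    ∑' k : ℕ, ENNReal.ofReal (ρ ^ k / (Nat.factorial k : ℝ)) *
      ∫⁻ x in {y : Fin k → (Fin d → ℝ) | ∀ i, y i ∈ Q},
        F (∑ i, Measure.dirac (x i))



section PoissonAux

variable {d : ℕ}

private lemma measurable_sumDirac (k : ℕ) :
    Measurable (fun x : Fin k → (Fin d → ℝ) => ∑ i, Measure.dirac (x i)) :=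
  Finset.measurable_sum _ fun i _ => Measure.measurable_dirac.comp (measurable_pi_apply i)

private lemma measurableSet_allMem {k : ℕ} {S : Set (Fin d → ℝ)} (hS : MeasurableSet S) :
    MeasurableSet {y : Fin k → (Fin d → ℝ) | ∀ i, y i ∈ S} := by
  have : {y : Fin k → (Fin d → ℝ) | ∀ i, y i ∈ S} = Set.pi Set.univ fun _ => S := by
    ext y; simp [Set.mem_univ_pi]
  rw [this]
  exact MeasurableSet.pi Set.countable_univ fun _ _ => hS

private lemma measurableSet_embMem {k n : ℕ} {B : Set (Fin d → ℝ)} (hB : MeasurableSet B)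
    (σ : Fin n ↪ Fin k) :
    MeasurableSet {y : Fin k → (Fin d → ℝ) | ∀ j, y (σ j) ∈ B} := by
  have : {y : Fin k → (Fin d → ℝ) | ∀ j, y (σ j) ∈ B} =
      ⋂ j, (fun y : Fin k → (Fin d → ℝ) => y (σ j)) ⁻¹' B := by
    ext y; simp
  rw [this]
  exact MeasurableSet.iInter fun j => (measurable_pi_apply (σ j)) hB

open scoped Classical in
private lemma sumDirac_apply {k : ℕ} (x : Fin k → (Fin d → ℝ)) {B : Set (Fin d → ℝ)}
    (hB : MeasurableSet B) :
    (∑ i, Measure.dirac (x i)) B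
      = ((Finset.univ.filter (fun i => x i ∈ B)).card : ℝ≥0∞) := by
  rw [Measure.finset_sum_apply, Finset.card_filter]
  push_cast
  refine Finset.sum_congr rfl fun i _ => ?_
  rw [Measure.dirac_apply' _ hB]
  by_cases h : x i ∈ B <;> simp [h]

private lemma exists_emb {k n : ℕ} {x : Fin k → (Fin d → ℝ)} {B : Set (Fin d → ℝ)}
    (hB : MeasurableSet B) (h : (n : ℝ≥0∞) ≤ (∑ i, Measure.dirac (x i)) B) :
    ∃ σ : Fin n ↪ Fin k, ∀ j, x (σ j) ∈ B := by
  classical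
  rw [sumDirac_apply x hB, Nat.cast_le] at h
  obtain ⟨t, hts, htc⟩ := Finset.exists_subset_card_eq h
  refine ⟨(t.orderEmbOfFin htc).toEmbedding, fun j => ?_⟩
  have h1 : (t.orderEmbOfFin htc) j ∈ t := Finset.orderEmbOfFin_mem t htc j
  have h2 := hts h1
  simpa using (Finset.mem_filter.mp h2).2

private lemma sumDirac_le {k : ℕ} (x : Fin k → (Fin d → ℝ)) {B : Set (Fin d → ℝ)}
    (hB : MeasurableSet B) :
    (∑ i, Measure.dirac (x i)) B ≤ (k : ℝ≥0∞) := by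
  classical
  rw [sumDirac_apply x hB, Nat.cast_le]
  exact (Finset.card_filter_le _ _).trans (by simp)

private lemma indicator_le {k n : ℕ} {B : Set (Fin d → ℝ)} (hB : MeasurableSet B)
    (F : Measure (Fin d → ℝ) → ℝ≥0∞) (x : Fin k → (Fin d → ℝ)) :
    Set.indicator {ν : Measure (Fin d → ℝ) | (n : ℝ≥0∞) ≤ ν B} F (∑ i, Measure.dirac (x i)) ≤
      ∑ σ : Fin n ↪ Fin k,
        Set.indicator {y : Fin k → (Fin d → ℝ) | ∀ j, y (σ j) ∈ B}
          (fun y => F (∑ i, Measure.dirac (y i))) x := by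
  classical
  by_cases h : (∑ i, Measure.dirac (x i)) ∈
      {ν : Measure (Fin d → ℝ) | (n : ℝ≥0∞) ≤ ν B}
  · rw [Set.indicator_of_mem h]
    obtain ⟨σ, hσ⟩ := exists_emb hB h
    have heq : F (∑ i, Measure.dirac (x i)) =
        Set.indicator {y : Fin k → (Fin d → ℝ) | ∀ j, y (σ j) ∈ B}
          (fun y => F (∑ i, Measure.dirac (y i))) x := by
      rw [Set.indicator_of_mem (show x ∈ {y : Fin k → (Fin d → ℝ) | ∀ j, y (σ j) ∈ B} from hσ)]
    rw [heq]
    exact Finset.single_le_sum (f := fun σ : Fin n ↪ Fin k =>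
      Set.indicator {y : Fin k → (Fin d → ℝ) | ∀ j, y (σ j) ∈ B}
        (fun y => F (∑ i, Measure.dirac (y i))) x)
      (fun _ _ => zero_le) (Finset.mem_univ σ)
  · rw [Set.indicator_of_notMem h]
    exact zero_le

private lemma exists_perm_comp {α β : Type*} [Fintype α] [DecidableEq α] [Fintype β]
    {f g : β → α} (hf : Function.Injective f) (hg : Function.Injective g) :
    ∃ τ : Equiv.Perm α, ∀ b, τ (f b) = g b := by
  classical
  have hcard : Fintype.card ((Set.range f)ᶜ : Set α) =
      Fintype.card ((Set.range g)ᶜ : Set α) := by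
    rw [Fintype.card_compl_set, Fintype.card_compl_set,
      Set.card_range_of_injective hf, Set.card_range_of_injective hg]
  let e1 : (Set.range f) ≃ (Set.range g) :=
    (Equiv.ofInjective f hf).symm.trans (Equiv.ofInjective g hg)
  let e2 : ((Set.range f)ᶜ : Set α) ≃ ((Set.range g)ᶜ : Set α) := Fintype.equivOfCardEq hcard
  refine ⟨(Equiv.Set.sumCompl (Set.range f)).symm.trans ((Equiv.sumCongr e1 e2).trans
    (Equiv.Set.sumCompl (Set.range g))), fun b => ?_⟩
  simp only [Equiv.trans_apply]
  rw [Equiv.Set.sumCompl_symm_apply_of_mem (Set.mem_range_self b)]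
  have h1 : (Equiv.ofInjective f hf).symm ⟨f b, Set.mem_range_self b⟩ = b :=
    Equiv.ofInjective_symm_apply hf b
  simp only [Equiv.sumCongr_apply, Sum.map_inl, e1, Equiv.trans_apply, h1,
    Equiv.Set.sumCompl_apply_inl]
  rfl

private lemma sumDirac_comp {k : ℕ} (τ : Equiv.Perm (Fin k)) (x : Fin k → (Fin d → ℝ)) :
    (∑ i, Measure.dirac (x (τ i))) = ∑ i, Measure.dirac (x i) :=
  Equiv.sum_comp τ (fun i => Measure.dirac (x i))

private lemma integral_emb_eq {m n : ℕ} (Q B : Set (Fin d → ℝ))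
    (F : Measure (Fin d → ℝ) → ℝ≥0∞) (σ : Fin n ↪ Fin (m + n)) :
    ∫⁻ x, Set.indicator ({y | ∀ j, y (σ j) ∈ B} ∩ {y : Fin (m + n) → (Fin d → ℝ) | ∀ i, y i ∈ Q})
        (fun y => F (∑ i, Measure.dirac (y i))) x =
    ∫⁻ x, Set.indicator ({y | ∀ j, y (Fin.natAdd m j) ∈ B} ∩
        {y : Fin (m + n) → (Fin d → ℝ) | ∀ i, y i ∈ Q})
        (fun y => F (∑ i, Measure.dirac (y i))) x := by
  classical
  have hnatAdd : Function.Injective (fun j : Fin n => Fin.natAdd m j) := by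
    intro a b h
    have := congrArg Fin.val h
    simp only [Fin.coe_natAdd] at this
    exact Fin.ext (Nat.add_left_cancel this)
  obtain ⟨τ, hτ⟩ := exists_perm_comp hnatAdd σ.injective
  have hmp : MeasurePreserving
      (MeasurableEquiv.piCongrLeft (fun _ : Fin (m + n) => (Fin d → ℝ)) τ) volume volume :=
    volume_measurePreserving_piCongrLeft _ τ
  rw [← hmp.lintegral_comp_emb (MeasurableEquiv.measurableEmbedding _)]
  refine lintegral_congr fun x => ?_
  have hφ : (MeasurableEquiv.piCongrLeft (fun _ : Fin (m + n) => (Fin d → ℝ)) τ) x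
      = fun i => x (τ.symm i) := by
    funext i
    have h := Equiv.piCongrLeft_apply_apply (fun _ : Fin (m + n) => (Fin d → ℝ)) τ x (τ.symm i)
    rw [MeasurableEquiv.coe_piCongrLeft]
    simpa using h
  rw [hφ]
  have hσs : ∀ j, τ.symm (σ j) = Fin.natAdd m j := fun j => by
    rw [Equiv.symm_apply_eq]; exact (hτ j).symm
  have hmem : ((fun i => x (τ.symm i)) ∈
      ({y | ∀ j, y (σ j) ∈ B} ∩ {y : Fin (m + n) → (Fin d → ℝ) | ∀ i, y i ∈ Q})) ↔
      (x ∈ ({y | ∀ j, y (Fin.natAdd m j) ∈ B} ∩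
        {y : Fin (m + n) → (Fin d → ℝ) | ∀ i, y i ∈ Q})) := by
    simp only [Set.mem_inter_iff, Set.mem_setOf_eq]
    constructor
    · rintro ⟨h1, h2⟩
      refine ⟨fun j => ?_, fun i => ?_⟩
      · have := h1 j; rwa [hσs j] at this
      · have := h2 (τ i); simpa using this
    · rintro ⟨h1, h2⟩
      exact ⟨fun j => by rw [hσs j]; exact h1 j, fun i => h2 _⟩
  have hval : F (∑ i, Measure.dirac (x (τ.symm i))) = F (∑ i, Measure.dirac (x i)) := by
    rw [sumDirac_comp τ.symm x]
  by_cases hx : x ∈ ({y | ∀ j, y (Fin.natAdd m j) ∈ B} ∩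
      {y : Fin (m + n) → (Fin d → ℝ) | ∀ i, y i ∈ Q})
  · rw [Set.indicator_of_mem (hmem.mpr hx), Set.indicator_of_mem hx]
    exact hval
  · rw [Set.indicator_of_notMem (fun h => hx (hmem.mp h)), Set.indicator_of_notMem hx]


private lemma split_step {m n : ℕ} (Q B : Set (Fin d → ℝ)) (hQ : MeasurableSet Q)
    (hB : MeasurableSet B) (hBQ : B ⊆ Q) (F : Measure (Fin d → ℝ) → ℝ≥0∞) (hF : Measurable F) :
    ∫⁻ x, Set.indicator ({y | ∀ j, y (Fin.natAdd m j) ∈ B} ∩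
        {y : Fin (m + n) → (Fin d → ℝ) | ∀ i, y i ∈ Q})
        (fun y => F (∑ i, Measure.dirac (y i))) x =
    ∫⁻ z in {z : Fin n → (Fin d → ℝ) | ∀ j, z j ∈ B},
      ∫⁻ w in {w : Fin m → (Fin d → ℝ) | ∀ i, w i ∈ Q},
        F ((∑ i, Measure.dirac (w i)) + ∑ j, Measure.dirac (z j)) := by
  classical
  set ψ : ((Fin m → (Fin d → ℝ)) × (Fin n → (Fin d → ℝ))) ≃ᵐ (Fin (m + n) → (Fin d → ℝ)) :=
    (MeasurableEquiv.sumPiEquivProdPi fun _ : Fin m ⊕ Fin n => (Fin d → ℝ)).symm.trans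
      (MeasurableEquiv.piCongrLeft (fun _ : Fin (m + n) => (Fin d → ℝ)) finSumFinEquiv) with hψ
  have hmp : MeasurePreserving ψ volume volume :=
    (volume_measurePreserving_piCongrLeft (fun _ : Fin (m + n) => (Fin d → ℝ))
      finSumFinEquiv).comp
      (volume_measurePreserving_sumPiEquivProdPi_symm (fun _ : Fin m ⊕ Fin n => (Fin d → ℝ)))
  rw [← hmp.lintegral_comp_emb (MeasurableEquiv.measurableEmbedding _)]
  have hψeq : ∀ p : (Fin m → (Fin d → ℝ)) × (Fin n → (Fin d → ℝ)),
      ψ p = Equiv.piCongrLeft (fun _ : Fin (m + n) => (Fin d → ℝ)) finSumFinEquiv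
        ((Equiv.sumPiEquivProdPi fun _ : Fin m ⊕ Fin n => (Fin d → ℝ)).symm p) := by
    intro p
    rw [hψ]
    rw [MeasurableEquiv.trans_apply, MeasurableEquiv.coe_piCongrLeft]
    congr 1
  have hl : ∀ (w : Fin m → (Fin d → ℝ)) (z : Fin n → (Fin d → ℝ)) (i : Fin m),
      ψ (w, z) (Fin.castAdd n i) = w i := by
    intro w z i
    rw [hψeq, ← finSumFinEquiv_apply_left]
    exact Equiv.piCongrLeft_sumInl (fun _ : Fin (m + n) => (Fin d → ℝ)) finSumFinEquiv w z i
  have hr : ∀ (w : Fin m → (Fin d → ℝ)) (z : Fin n → (Fin d → ℝ)) (j : Fin n),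
      ψ (w, z) (Fin.natAdd m j) = z j := by
    intro w z j
    rw [hψeq, ← finSumFinEquiv_apply_right]
    exact Equiv.piCongrLeft_sumInr (fun _ : Fin (m + n) => (Fin d → ℝ)) finSumFinEquiv w z j
  set S' : Set ((Fin m → (Fin d → ℝ)) × (Fin n → (Fin d → ℝ))) :=
    {p | ∀ j, p.2 j ∈ B} ∩ {p | ∀ i, p.1 i ∈ Q} with hS'
  set g : ((Fin m → (Fin d → ℝ)) × (Fin n → (Fin d → ℝ))) → ℝ≥0∞ :=
    Set.indicator S' (fun p => F ((∑ i, Measure.dirac (p.1 i)) + ∑ j, Measure.dirac (p.2 j)))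
    with hg
  have hgmeas : Measurable g := by
    refine Measurable.indicator ?_ ?_
    · exact hF.comp (Measurable.add
        ((measurable_sumDirac m).comp measurable_fst)
        ((measurable_sumDirac n).comp measurable_snd))
    · exact (measurable_snd (measurableSet_allMem hB)).inter
        (measurable_fst (measurableSet_allMem hQ))
  have hcongr : ∀ p, Set.indicator ({y | ∀ j, y (Fin.natAdd m j) ∈ B} ∩
      {y : Fin (m + n) → (Fin d → ℝ) | ∀ i, y i ∈ Q})
      (fun y => F (∑ i, Measure.dirac (y i))) (ψ p) = g p := by
    rintro ⟨w, z⟩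
    have hTsplit : (∑ i : Fin (m + n), Measure.dirac (ψ (w, z) i)) =
        (∑ i, Measure.dirac (w i)) + ∑ j, Measure.dirac (z j) := by
      rw [← Equiv.sum_comp finSumFinEquiv (fun i => Measure.dirac (ψ (w, z) i)),
        Fintype.sum_sum_type]
      congr 1
      · exact Finset.sum_congr rfl fun i _ => by rw [finSumFinEquiv_apply_left, hl]
      · exact Finset.sum_congr rfl fun j _ => by rw [finSumFinEquiv_apply_right, hr]
    have hmem : ψ (w, z) ∈ ({y | ∀ j, y (Fin.natAdd m j) ∈ B} ∩
        {y : Fin (m + n) → (Fin d → ℝ) | ∀ i, y i ∈ Q}) ↔ (w, z) ∈ S' := by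
      simp only [Set.mem_inter_iff, Set.mem_setOf_eq, hS']
      constructor
      · rintro ⟨h1, h2⟩
        refine ⟨fun j => ?_, fun i => ?_⟩
        · have := h1 j; rwa [hr] at this
        · have := h2 (Fin.castAdd n i); rwa [hl] at this
      · rintro ⟨h1, h2⟩
        refine ⟨fun j => ?_, fun i => ?_⟩
        · rw [hr]; exact h1 j
        · obtain ⟨s, rfl⟩ := finSumFinEquiv.surjective i
          cases s with
          | inl i => rw [finSumFinEquiv_apply_left, hl]; exact h2 i
          | inr j => rw [finSumFinEquiv_apply_right, hr]; exact hBQ (h1 j)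
    by_cases hp : (w, z) ∈ S'
    · rw [Set.indicator_of_mem (hmem.mpr hp), hg, Set.indicator_of_mem hp, hTsplit]
    · rw [Set.indicator_of_notMem (fun h => hp (hmem.mp h)), hg,
        Set.indicator_of_notMem hp]
  calc ∫⁻ p, Set.indicator ({y | ∀ j, y (Fin.natAdd m j) ∈ B} ∩
        {y : Fin (m + n) → (Fin d → ℝ) | ∀ i, y i ∈ Q})
        (fun y => F (∑ i, Measure.dirac (y i))) (ψ p)
      = ∫⁻ p, g p := lintegral_congr hcongr
    _ = ∫⁻ z, ∫⁻ w, g (w, z) := by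
        rw [MeasureTheory.Measure.volume_eq_prod, lintegral_prod_symm g hgmeas.aemeasurable]
    _ = ∫⁻ z, Set.indicator {z : Fin n → (Fin d → ℝ) | ∀ j, z j ∈ B}
          (fun z => ∫⁻ w in {w : Fin m → (Fin d → ℝ) | ∀ i, w i ∈ Q},
            F ((∑ i, Measure.dirac (w i)) + ∑ j, Measure.dirac (z j))) z := by
        refine lintegral_congr fun z => ?_
        by_cases hz : z ∈ {z : Fin n → (Fin d → ℝ) | ∀ j, z j ∈ B}
        · rw [Set.indicator_of_mem (s := {z : Fin n → (Fin d → ℝ) | ∀ j, z j ∈ B}) hz]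
          rw [← lintegral_indicator (measurableSet_allMem hQ)]
          refine lintegral_congr fun w => ?_
          rw [hg]
          by_cases hw : w ∈ {w : Fin m → (Fin d → ℝ) | ∀ i, w i ∈ Q}
          · rw [Set.indicator_of_mem (s := {w : Fin m → (Fin d → ℝ) | ∀ i, w i ∈ Q}) hw,
              Set.indicator_of_mem (s := S') (Set.mem_inter hz hw)]
          · rw [Set.indicator_of_notMem (s := {w : Fin m → (Fin d → ℝ) | ∀ i, w i ∈ Q}) hw,
              Set.indicator_of_notMem (s := S') (fun h => hw h.2)]
        · rw [Set.indicator_of_notMem (s := {z : Fin n → (Fin d → ℝ) | ∀ j, z j ∈ B}) hz]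
          have : ∀ w, g (w, z) = 0 := fun w =>
            Set.indicator_of_notMem (fun h => hz h.1) _
          simp [this]
    _ = _ := lintegral_indicator (measurableSet_allMem hB) _


private lemma coeff_eq {ρ : ℝ} (hρ : 0 < ρ) (m n : ℕ) :
    ENNReal.ofReal (ρ ^ (m + n) / ((m + n).factorial : ℝ)) * (((m + n).descFactorial n : ℕ) : ℝ≥0∞)
      = ENNReal.ofReal (ρ ^ n) * ENNReal.ofReal (ρ ^ m / (m.factorial : ℝ)) := by
  rw [← ENNReal.ofReal_natCast ((m + n).descFactorial n), ← ENNReal.ofReal_mul (by positivity),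
    ← ENNReal.ofReal_mul (by positivity)]
  congr 1
  have hfac : ((m + n).factorial : ℝ) = (m.factorial : ℝ) * ((m + n).descFactorial n : ℝ) := by
    rw [← Nat.cast_mul]
    norm_cast
    have := Nat.factorial_mul_descFactorial (show n ≤ m + n from Nat.le_add_left n m)
    simpa [Nat.add_sub_cancel] using this.symm
  have h1 : (m.factorial : ℝ) ≠ 0 := by positivity
  have h2 : ((m + n).descFactorial n : ℝ) ≠ 0 := by
    have h3 : (m + n).descFactorial n ≠ 0 := by
      intro h
      exact absurd (Nat.descFactorial_eq_zero_iff_lt.mp h) (by omega)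
    exact_mod_cast h3
  rw [hfac, pow_add]
  field_simp

end PoissonAux

/-- `E_ρ^Q[F(μ)·1{μ(B) ≥ n}] ≤ ρ^n ∫_{B^n} E_ρ^Q[F(μ + δ_{y₁} + ⋯ + δ_{y_n})] dy₁⋯dy_n`. -/
theorem poisson_many_particles_bound
    {d : ℕ} (hd : 1 ≤ d) (ρ : ℝ) (hρ : 0 < ρ)
    (Q : Set (Fin d → ℝ)) (hQ : MeasurableSet Q) (hQb : Bornology.IsBounded Q)
    (B : Set (Fin d → ℝ)) (hB : MeasurableSet B) (hBQ : B ⊆ Q)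
    (n : ℕ)
    (F : Measure (Fin d → ℝ) → ℝ≥0∞) (hF : Measurable F) :
    poissonExp d ρ Q
        (fun μ => Set.indicator {ν : Measure (Fin d → ℝ) | (n : ℝ≥0∞) ≤ ν B} F μ) ≤
      ENNReal.ofReal (ρ ^ n) *
        ∫⁻ y in {z : Fin n → (Fin d → ℝ) | ∀ i, z i ∈ B},
          poissonExp d ρ Q (fun μ => F (μ + ∑ i, Measure.dirac (y i))) := by
  classical
  -- abbreviations
  let c : ℝ≥0∞ := ENNReal.ofReal (Real.exp (-(ρ * (volume Q).toReal)))
  let a : ℕ → ℝ≥0∞ := fun k => ENNReal.ofReal (ρ ^ k / (Nat.factorial k : ℝ))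
  let H : (m : ℕ) → (Fin n → (Fin d → ℝ)) → ℝ≥0∞ := fun m z =>
    ∫⁻ w in {w : Fin m → (Fin d → ℝ) | ∀ i, w i ∈ Q},
      F ((∑ i, Measure.dirac (w i)) + ∑ j, Measure.dirac (z j))
  let J : ℕ → ℝ≥0∞ := fun k =>
    ∫⁻ x in {y : Fin k → (Fin d → ℝ) | ∀ i, y i ∈ Q},
      Set.indicator {ν : Measure (Fin d → ℝ) | (n : ℝ≥0∞) ≤ ν B} F (∑ i, Measure.dirac (x i))
  let I : ℕ → ℝ≥0∞ := fun m => ∫⁻ z in {z : Fin n → (Fin d → ℝ) | ∀ j, z j ∈ B}, H m z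
  -- measurability of H m
  have hHmeas : ∀ m : ℕ, Measurable (H m) := by
    intro m
    have hG : Measurable (Set.indicator
        {p : (Fin n → (Fin d → ℝ)) × (Fin m → (Fin d → ℝ)) | ∀ i, p.2 i ∈ Q}
        (fun p => F ((∑ i, Measure.dirac (p.2 i)) + ∑ j, Measure.dirac (p.1 j)))) := by
      refine Measurable.indicator ?_ (measurable_snd (measurableSet_allMem hQ))
      exact hF.comp (((measurable_sumDirac m).comp measurable_snd).add
        ((measurable_sumDirac n).comp measurable_fst))
    have heq : H m = fun z => ∫⁻ w, Set.indicator
        {p : (Fin n → (Fin d → ℝ)) × (Fin m → (Fin d → ℝ)) | ∀ i, p.2 i ∈ Q}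
        (fun p => F ((∑ i, Measure.dirac (p.2 i)) + ∑ j, Measure.dirac (p.1 j))) (z, w) := by
      funext z
      rw [show (H m z) = ∫⁻ w in {w : Fin m → (Fin d → ℝ) | ∀ i, w i ∈ Q},
        F ((∑ i, Measure.dirac (w i)) + ∑ j, Measure.dirac (z j)) from rfl]
      rw [← lintegral_indicator (measurableSet_allMem hQ)]
      exact lintegral_congr fun w => rfl
    rw [heq]
    exact Measurable.lintegral_prod_right
      (f := fun z w => Set.indicator
        {p : (Fin n → (Fin d → ℝ)) × (Fin m → (Fin d → ℝ)) | ∀ i, p.2 i ∈ Q}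
        (fun p => F ((∑ i, Measure.dirac (p.2 i)) + ∑ j, Measure.dirac (p.1 j))) (z, w)) hG
  -- the per-k bound
  let i : ℕ → ℕ := fun m => m + n
  have hinj : Function.Injective i := fun a b h => by simpa [i] using h
  let g : ℕ → ℝ≥0∞ := fun m => ENNReal.ofReal (ρ ^ n) * (a m * I m)
  let ext : ℕ → ℝ≥0∞ := Function.extend i g 0
  have hbound : ∀ k : ℕ, a k * J k ≤ ext k := by
    intro k
    by_cases hex : ∃ m, i m = k
    · obtain ⟨m, rfl⟩ := hex
      have hext : ext (i m) = g m := hinj.extend_apply g 0 m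
      rw [hext]
      -- step A + B : bound by sum over embeddings
      have stepAB : J (m + n) ≤ ∑ σ : Fin n ↪ Fin (m + n),
          ∫⁻ x in {y : Fin (m + n) → (Fin d → ℝ) | ∀ i, y i ∈ Q},
            Set.indicator {y : Fin (m + n) → (Fin d → ℝ) | ∀ j, y (σ j) ∈ B}
              (fun y => F (∑ i, Measure.dirac (y i))) x := by
        refine le_trans (lintegral_mono fun x => indicator_le hB F x) ?_
        exact le_of_eq (lintegral_finset_sum' _ fun σ _ =>
          ((hF.comp (measurable_sumDirac _)).indicator (measurableSet_embMem hB σ)).aemeasurable)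
      -- step C : each term equals the canonical one
      have stepC : ∀ σ : Fin n ↪ Fin (m + n),
          ∫⁻ x in {y : Fin (m + n) → (Fin d → ℝ) | ∀ i, y i ∈ Q},
            Set.indicator {y : Fin (m + n) → (Fin d → ℝ) | ∀ j, y (σ j) ∈ B}
              (fun y => F (∑ i, Measure.dirac (y i))) x
          = ∫⁻ x, Set.indicator ({y | ∀ j, y (Fin.natAdd m j) ∈ B} ∩
              {y : Fin (m + n) → (Fin d → ℝ) | ∀ i, y i ∈ Q})
              (fun y => F (∑ i, Measure.dirac (y i))) x := by
        intro σ
        rw [lintegral_indicator (measurableSet_embMem hB σ),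
          Measure.restrict_restrict (measurableSet_embMem hB σ),
          ← lintegral_indicator ((measurableSet_embMem hB σ).inter (measurableSet_allMem hQ))]
        exact integral_emb_eq Q B F σ
      have stepD : ∫⁻ x, Set.indicator ({y | ∀ j, y (Fin.natAdd m j) ∈ B} ∩
              {y : Fin (m + n) → (Fin d → ℝ) | ∀ i, y i ∈ Q})
              (fun y => F (∑ i, Measure.dirac (y i))) x = I m :=
        split_step Q B hQ hB hBQ F hF
      have hcount : ∑ σ : Fin n ↪ Fin (m + n),
          ∫⁻ x in {y : Fin (m + n) → (Fin d → ℝ) | ∀ i, y i ∈ Q},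
            Set.indicator {y : Fin (m + n) → (Fin d → ℝ) | ∀ j, y (σ j) ∈ B}
              (fun y => F (∑ i, Measure.dirac (y i))) x
          = (((m + n).descFactorial n : ℕ) : ℝ≥0∞) * I m := by
        rw [Finset.sum_congr rfl fun σ _ => (stepC σ).trans stepD]
        rw [Finset.sum_const, nsmul_eq_mul]
        congr 2
        rw [Finset.card_univ, Fintype.card_embedding_eq, Fintype.card_fin, Fintype.card_fin]
      have : J (m + n) ≤ (((m + n).descFactorial n : ℕ) : ℝ≥0∞) * I m := by
        rw [← hcount]; exact stepAB
      calc a (m + n) * J (m + n)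
          ≤ a (m + n) * ((((m + n).descFactorial n : ℕ) : ℝ≥0∞) * I m) :=
            mul_le_mul_right this _
        _ = (a (m + n) * (((m + n).descFactorial n : ℕ) : ℝ≥0∞)) * I m := by ring
        _ = (ENNReal.ofReal (ρ ^ n) * a m) * I m := by rw [coeff_eq hρ m n]
        _ = g m := by simp only [g]; ring
    · rw [show ext k = 0 from by
        simp only [ext]; rw [Function.extend_apply' _ _ _ hex]; rfl]
      have hk : k < n := by
        by_contra hk
        push_neg at hk
        exact hex ⟨k - n, by simp [i]; omega⟩
      have hJ : J k = 0 := by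
        have hzero : ∀ x : Fin k → (Fin d → ℝ),
            Set.indicator {ν : Measure (Fin d → ℝ) | (n : ℝ≥0∞) ≤ ν B} F
              (∑ i, Measure.dirac (x i)) = 0 := by
          intro x
          refine Set.indicator_of_notMem ?_ _
          intro hmem
          have hle : ((n : ℕ) : ℝ≥0∞) ≤ (k : ℝ≥0∞) := le_trans hmem (sumDirac_le x hB)
          rw [Nat.cast_le] at hle
          omega
        simp only [J]
        rw [lintegral_congr hzero, lintegral_zero]
      rw [hJ, mul_zero]
  -- RHS computation
  have hRHS : ∫⁻ y in {z : Fin n → (Fin d → ℝ) | ∀ i, z i ∈ B},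
      poissonExp d ρ Q (fun μ => F (μ + ∑ i, Measure.dirac (y i)))
      = c * ∑' m, a m * I m := by
    have hpe : ∀ y : Fin n → (Fin d → ℝ),
        poissonExp d ρ Q (fun μ => F (μ + ∑ i, Measure.dirac (y i)))
        = c * ∑' m, a m * H m y := fun _ => rfl
    calc ∫⁻ y in {z : Fin n → (Fin d → ℝ) | ∀ i, z i ∈ B},
        poissonExp d ρ Q (fun μ => F (μ + ∑ i, Measure.dirac (y i)))
        = ∫⁻ y in {z : Fin n → (Fin d → ℝ) | ∀ i, z i ∈ B}, c * ∑' m, a m * H m y :=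
          lintegral_congr hpe
      _ = c * ∫⁻ y in {z : Fin n → (Fin d → ℝ) | ∀ i, z i ∈ B}, ∑' m, a m * H m y :=
          lintegral_const_mul c (Measurable.ennreal_tsum fun m =>
            measurable_const.mul (hHmeas m))
      _ = c * ∑' m, ∫⁻ y in {z : Fin n → (Fin d → ℝ) | ∀ i, z i ∈ B}, a m * H m y := by
          rw [lintegral_tsum (f := fun m y => a m * H m y) fun m => (measurable_const.mul (hHmeas m)).aemeasurable]
      _ = c * ∑' m, a m * I m := by
          congr 1
          exact tsum_congr fun m => lintegral_const_mul _ (hHmeas m)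
  -- put everything together
  have hLHS : poissonExp d ρ Q
      (fun μ => Set.indicator {ν : Measure (Fin d → ℝ) | (n : ℝ≥0∞) ≤ ν B} F μ)
      = c * ∑' k, a k * J k := rfl
  rw [hLHS, hRHS]
  have h1 : ∑' k, a k * J k ≤ ∑' k, ext k := ENNReal.tsum_le_tsum hbound
  have h2 : ∑' k, ext k = ∑' m, g m := by
    have hsupp : Function.support ext ⊆ Set.range i := by
      intro x hx
      by_contra hxr
      apply hx
      simp only [ext]
      rw [Function.extend_apply' g (0 : ℕ → ℝ≥0∞) x (by simpa using hxr)]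
      rfl
    have h3 := hinj.tsum_eq (f := ext) hsupp
    rw [← h3]
    exact tsum_congr fun m => hinj.extend_apply g 0 m
  calc c * ∑' k, a k * J k ≤ c * ∑' k, ext k := mul_le_mul_right h1 c
    _ = c * ∑' m, g m := by rw [h2]
    _ = ENNReal.ofReal (ρ ^ n) * (c * ∑' m, a m * I m) := by
        simp only [g]
        rw [ENNReal.tsum_mul_left]
        ring
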